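/- Suppose φ, ψ are Schwartz functions on ℍ and there exist constants k, c > 0 and a nonzero real number q such that for all a>0, φ̃_{a^q} ⋆ φ_{a^q} = −a·c·(d/da)ψ_{k a^q}. Then for every Schwartz function g on ℍ and all 0 < ε < A < ∞, g ⋆ (∫_ε^A φ̃_a ⋆ φ_a a⁻¹ da) = q·c·( g⋆ψ_{εk} − g⋆ψ_{Ak} ). -/

import Mathlib

open MeasureTheory Filter Topology

noncomputable section

/-- The underlying space of the Heisenberg group: ℝ³. -/
abbrev H3 : Type := ℝ × ℝ × ℝ

/-- Heisenberg group multiplication. -/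
def Hmul (x y : H3) : H3 :=
  (x.1 + y.1, x.2.1 + y.2.1, x.2.2 + y.2.2 + (x.1 * y.2.1 - x.2.1 * y.1) / 2)

/-- Heisenberg group inverse. -/
def Hinv (x : H3) : H3 := (-x.1, -x.2.1, -x.2.2)

/-- Dilation δ_a(p,q,t) = (ap, aq, a²t). -/
def Hdil (a : ℝ) (x : H3) : H3 := (a * x.1, a * x.2.1, a ^ 2 * x.2.2)

/-- Convolution on the Heisenberg group (complex valued):
(f⋆g)(x) = ∫ f(y) g(y⁻¹x) dy. -/
def Hconv (f g : H3 → ℂ) (x : H3) : ℂ := ∫ y : H3, f y * g (Hmul (Hinv y) x)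

/-- Convolution on the Heisenberg group (real valued). -/
def HconvR (f g : H3 → ℝ) (x : H3) : ℝ := ∫ y : H3, f y * g (Hmul (Hinv y) x)

/-- f̃(x) = conj (f (x⁻¹)). -/
def Htilde (f : H3 → ℂ) (x : H3) : ℂ := starRingEnd ℂ (f (Hinv x))

/-- The dilate f_a(ω) = a⁻⁴ f(a⁻¹ω). -/
def Hdilate (f : H3 → ℂ) (a : ℝ) (x : H3) : ℂ := ((a ^ 4 : ℝ) : ℂ)⁻¹ * f (Hdil a⁻¹ x)

/-- The dilate f_a(ω) = a⁻⁴ f(a⁻¹ω), real-valued case. -/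
def HdilateR (f : H3 → ℝ) (a : ℝ) (x : H3) : ℝ := (a ^ 4)⁻¹ * f (Hdil a⁻¹ x)

/-- D_a f(ω) = a⁻² f(a⁻¹ω). -/
def Dop (a : ℝ) (f : H3 → ℂ) (x : H3) : ℂ := ((a ^ 2 : ℝ) : ℂ)⁻¹ * f (Hdil a⁻¹ x)

/-- The quasi-regular representation π(ω,a)f(υ) = a⁻² f(a⁻¹(ω⁻¹∗υ)). -/
def qrep (ω : H3) (a : ℝ) (f : H3 → ℂ) (υ : H3) : ℂ :=
  ((a ^ 2 : ℝ) : ℂ)⁻¹ * f (Hdil a⁻¹ (Hmul (Hinv ω) υ))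

/-- Wavelet coefficient V_φ f(ω,a) = ⟨f, π(ω,a)φ⟩ (L²(ℍ) inner product). -/
def Vcoef (φ f : H3 → ℂ) (ω : H3) (a : ℝ) : ℂ :=
  ∫ x : H3, f x * starRingEnd ℂ (qrep ω a φ x)

/-- Schwartz functions on ℍ are the Schwartz functions on ℝ³. -/
def IsSchwartz (f : H3 → ℂ) : Prop := ∃ Φ : SchwartzMap H3 ℂ, ⇑Φ = f

def IsSchwartzR (f : H3 → ℝ) : Prop := ∃ Φ : SchwartzMap H3 ℝ, ⇑Φ = f

/-- φ is admissible: ‖f‖₂² = c ∫_ℍ∫₀^∞ |V_φf(ω,a)|² a⁻⁵ da dω for some c > 0. -/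
def Admissible (φ : H3 → ℂ) : Prop :=
  ∃ c : ℝ, 0 < c ∧ ∀ f : H3 → ℂ, MemLp f 2 volume →
    (∫ x : H3, ‖f x‖ ^ 2) =
      c * ∫ ω : H3, ∫ a in Set.Ioi (0 : ℝ), ‖Vcoef φ f ω a‖ ^ 2 * (a ^ 5)⁻¹

/-- The Calderón kernel K_{ε,A} = ∫_ε^A φ̃_a ⋆ φ_a a⁻¹ da. -/
def Kker (φ : H3 → ℂ) (ε A : ℝ) (x : H3) : ℂ :=
  ∫ a in Set.Ioo ε A, Hconv (Hdilate (Htilde φ) a) (Hdilate φ a) x * ((a : ℝ) : ℂ)⁻¹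

/-- Calderón admissibility: for some c ≠ 0 and every Schwartz g,
g ⋆ K_{ε,A} → c·g in the sense of tempered distributions as ε → 0, A → ∞. -/
def CalderonAdmissible (φ : H3 → ℂ) : Prop :=
  ∃ c : ℂ, c ≠ 0 ∧ ∀ g : H3 → ℂ, IsSchwartz g →
    ∀ u : SchwartzMap H3 ℂ,
      Tendsto (fun p : ℝ × ℝ => ∫ x : H3, Hconv g (Kker φ p.1 p.2) x * u x)
        ((𝓝[>] (0 : ℝ)) ×ˢ atTop) (𝓝 (c * ∫ x : H3, g x * u x))

/-- Partial derivatives on ℝ³. -/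
def pd1 (f : H3 → ℝ) (x : H3) : ℝ := fderiv ℝ f x (1, 0, 0)
def pd2 (f : H3 → ℝ) (x : H3) : ℝ := fderiv ℝ f x (0, 1, 0)
def pd3 (f : H3 → ℝ) (x : H3) : ℝ := fderiv ℝ f x (0, 0, 1)

/-- Left-invariant vector field X = ∂_p − (q/2)∂_t. -/
def Xop (f : H3 → ℝ) (x : H3) : ℝ := pd1 f x - x.2.1 / 2 * pd3 f x

/-- Left-invariant vector field Y = ∂_q + (p/2)∂_t. -/
def Yop (f : H3 → ℝ) (x : H3) : ℝ := pd2 f x + x.1 / 2 * pd3 f x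

/-- Sub-Laplacian L = −(X² + Y²). -/
def subL (f : H3 → ℝ) (x : H3) : ℝ := -(Xop (Xop f) x + Yop (Yop f) x)

/-- Left Haar measure a⁻⁵ dω da on G = ℍ⋊(0,∞). -/
def muG : Measure (H3 × ℝ) :=
  (((volume : Measure H3).prod ((volume : Measure ℝ).restrict (Set.Ioi 0))).withDensity
    fun p => ENNReal.ofReal ((p.2 ^ 5)⁻¹))

instance : MeasureTheory.Measure.IsAddHaarMeasure (volume : Measure H3) :=
  MeasureTheory.Measure.prod.instIsAddHaarMeasure volume volume

/-- Smoothness of the dilation parameter map. -/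
lemma contDiffOn_Hdilate (Ψ : SchwartzMap H3 ℂ) (z : H3) :
    ContDiffOn ℝ ((⊤ : ℕ∞) : WithTop ℕ∞) (fun s : ℝ => Hdilate (⇑Ψ) s z) (Set.Ioi 0) := by
  have hinv : ContDiffOn ℝ ((⊤ : ℕ∞) : WithTop ℕ∞) (fun s : ℝ => s⁻¹) (Set.Ioi 0) :=
    contDiffOn_id.inv fun s hs => ne_of_gt hs
  have h1 : ContDiffOn ℝ ((⊤ : ℕ∞) : WithTop ℕ∞) (fun s : ℝ => Hdil s⁻¹ z) (Set.Ioi 0) := by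
    unfold Hdil
    exact (hinv.mul contDiffOn_const).prodMk
      ((hinv.mul contDiffOn_const).prodMk ((hinv.pow 2).mul contDiffOn_const))
  have h2 : ContDiffOn ℝ ((⊤ : ℕ∞) : WithTop ℕ∞) (fun s : ℝ => Ψ (Hdil s⁻¹ z)) (Set.Ioi 0) :=
    (Ψ.smooth ⊤).comp_contDiffOn h1
  have h3 : ContDiffOn ℝ ((⊤ : ℕ∞) : WithTop ℕ∞) (fun s : ℝ => (((s ^ 4 : ℝ) : ℂ))⁻¹) (Set.Ioi 0) := by
    refine ContDiffOn.inv ?_ ?_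
    · exact (Complex.ofRealCLM.contDiff.comp (contDiff_id.pow 4)).contDiffOn
    · intro s hs
      have : (0:ℝ) < s := hs
      exact Complex.ofReal_ne_zero.mpr (by positivity)
  exact h3.mul h2

/-- Pointwise evaluation of the Calderón kernel. -/
lemma Kker_eq_telescope (φ ψ : H3 → ℂ) (hψ : IsSchwartz ψ)
    (k c : ℝ) (hk : 0 < k) (q : ℝ) (hq : q ≠ 0)
    (hrel : ∀ a : ℝ, 0 < a → ∀ x : H3,
      Hconv (Hdilate (Htilde φ) (a ^ q)) (Hdilate φ (a ^ q)) x
        = -(((a * c : ℝ) : ℂ)) * deriv (fun b : ℝ => Hdilate ψ (k * b ^ q) x) a)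
    (ε A : ℝ) (hε : 0 < ε) (hεA : ε < A) (z : H3) :
    Kker φ ε A z
      = ((q * c : ℝ) : ℂ) * (Hdilate ψ (ε * k) z - Hdilate ψ (A * k) z) := by
  obtain ⟨Ψ, hΨ⟩ := hψ
  subst hΨ
  set h : ℝ → ℂ := fun s => Hdilate (⇑Ψ) s z with hh
  have hsm : ContDiffOn ℝ ((⊤ : ℕ∞) : WithTop ℕ∞) h (Set.Ioi 0) := contDiffOn_Hdilate Ψ z
  have hD : ∀ s ∈ Set.Ioi (0 : ℝ), HasDerivAt h (deriv h s) s := fun s hs =>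
    ((hsm.differentiableOn (by simp)).differentiableAt (isOpen_Ioi.mem_nhds hs)).hasDerivAt
  have hDc : ContinuousOn (deriv h) (Set.Ioi 0) :=
    hsm.continuousOn_deriv_of_isOpen isOpen_Ioi (by exact_mod_cast le_top)
  set g' : ℝ → ℂ := fun a => k • deriv h (k * a) with hg'
  -- the integrand equals -(q c) g' on (ε, A)
  have hpt : Set.EqOn
      (fun a : ℝ => Hconv (Hdilate (Htilde φ) a) (Hdilate φ a) z * ((a : ℝ) : ℂ)⁻¹)
      (fun a : ℝ => -(((q * c : ℝ) : ℂ)) * g' a) (Set.Ioo ε A) := by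
    intro a ha
    have ha0 : 0 < a := hε.trans ha.1
    set b : ℝ := a ^ (q⁻¹) with hbdef
    have hb : 0 < b := Real.rpow_pos_of_pos ha0 _
    have hbq : b ^ q = a := Real.rpow_inv_rpow ha0.le hq
    have hrb := hrel b hb z
    rw [hbq] at hrb
    -- compute the derivative in hrb
    have hrpow : HasDerivAt (fun t : ℝ => t ^ q) (q * b ^ (q - 1)) b :=
      Real.hasDerivAt_rpow_const (Or.inl hb.ne')
    have hmul : HasDerivAt (fun t : ℝ => k * t ^ q) (k * (q * b ^ (q - 1))) b :=
      hrpow.const_mul k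
    have hka : (0 : ℝ) < k * b ^ q := by rw [hbq]; exact mul_pos hk ha0
    have hF : HasDerivAt (fun t : ℝ => Hdilate (⇑Ψ) (k * t ^ q) z)
        ((k * (q * b ^ (q - 1))) • deriv h (k * a)) b := by
      have := (hD (k * b ^ q) hka).scomp b hmul
      rw [hbq] at this
      exact this
    rw [hF.deriv] at hrb
    show Hconv (Hdilate (Htilde φ) a) (Hdilate φ a) z * ((a : ℝ) : ℂ)⁻¹
        = -(((q * c : ℝ) : ℂ)) * g' a
    rw [hrb]
    set D : ℂ := deriv h (k * a) with hD'
    have hbb : b * b ^ (q - 1) = a := by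
      have h1 := Real.rpow_add hb 1 (q - 1)
      rw [show (1 : ℝ) + (q - 1) = q by ring, Real.rpow_one] at h1
      rw [← h1, hbq]
    have hcoR : (b * c) * (k * (q * b ^ (q - 1))) = (q * c) * k * a := by
      rw [← hbb]; ring
    have hco : ((b * c : ℝ) : ℂ) * (((k * (q * b ^ (q - 1))) : ℝ) : ℂ)
        = ((q * c : ℝ) : ℂ) * ((k : ℝ) : ℂ) * ((a : ℝ) : ℂ) := by
      rw [← Complex.ofReal_mul, ← Complex.ofReal_mul, ← Complex.ofReal_mul, hcoR]
    have haC : ((a : ℝ) : ℂ) ≠ 0 := by exact_mod_cast ha0.ne'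
    rw [hg']
    simp only [Complex.real_smul]
    push_cast at hco ⊢
    field_simp
    linear_combination (-D) * hco
  unfold Kker
  rw [MeasureTheory.setIntegral_congr_fun measurableSet_Ioo hpt,
    ← MeasureTheory.integral_Ioc_eq_integral_Ioo, ← intervalIntegral.integral_of_le hεA.le,
    intervalIntegral.integral_const_mul]
  have hG : ∀ a ∈ Set.uIcc ε A, HasDerivAt (fun a : ℝ => h (k * a)) (g' a) a := by
    intro a ha
    rw [Set.uIcc_of_le hεA.le] at ha
    have ha0 : 0 < a := lt_of_lt_of_le hε ha.1
    have h1 : HasDerivAt (fun a : ℝ => k * a) k a := by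
      simpa using (hasDerivAt_id a).const_mul k
    exact (hD (k * a) (mul_pos hk ha0)).scomp a h1
  have hint : IntervalIntegrable g' volume ε A := by
    apply ContinuousOn.intervalIntegrable
    rw [hg']
    refine ContinuousOn.const_smul (g := fun a => deriv h (k * a)) ?_ k
    apply hDc.comp (continuous_const.mul continuous_id).continuousOn
    intro a ha
    rw [Set.uIcc_of_le hεA.le] at ha
    exact mul_pos hk (lt_of_lt_of_le hε ha.1)
  rw [intervalIntegral.integral_eq_sub_of_hasDerivAt hG hint]
  have e1 : Hdilate (⇑Ψ) (ε * k) z = h (k * ε) := by rw [hh, mul_comm]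
  have e2 : Hdilate (⇑Ψ) (A * k) z = h (k * A) := by rw [hh, mul_comm]
  rw [e1, e2]
  ring

/-- Integrability of a Schwartz function against a bounded dilate. -/
lemma integrable_mul_Hdilate (Γ Ψ : SchwartzMap H3 ℂ) (a : ℝ) (ha : 0 < a) (x : H3) :
    Integrable (fun y : H3 => Γ y * Hdilate (⇑Ψ) a (Hmul (Hinv y) x)) volume := by
  obtain ⟨C, hCpos, hC⟩ := Ψ.decay 0 0
  have hCb : ∀ w : H3, ‖Ψ w‖ ≤ C := by
    intro w
    have := hC w
    simpa [norm_iteratedFDeriv_zero] using this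
  have hcont : Continuous fun y : H3 => Hdilate (⇑Ψ) a (Hmul (Hinv y) x) := by
    unfold Hdilate
    refine continuous_const.mul (Ψ.continuous.comp ?_)
    unfold Hdil Hmul Hinv
    fun_prop
  have hbd : ∃ C', ∀ y : H3, ‖Hdilate (⇑Ψ) a (Hmul (Hinv y) x)‖ ≤ C' := by
    refine ⟨|(a ^ 4)⁻¹| * C, fun y => ?_⟩
    unfold Hdilate
    rw [norm_mul]
    have h1 : ‖(((a ^ 4 : ℝ) : ℂ))⁻¹‖ = |(a ^ 4)⁻¹| := by
      rw [← Complex.ofReal_inv, Complex.norm_real, Real.norm_eq_abs]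
    rw [h1]
    exact mul_le_mul_of_nonneg_left (hCb _) (abs_nonneg _)
  have h1 : Integrable
      (fun y : H3 => Hdilate (⇑Ψ) a (Hmul (Hinv y) x) * Γ y) volume :=
    by obtain ⟨C', hC'⟩ := hbd; exact Integrable.bdd_mul Γ.integrable hcont.aestronglyMeasurable (Filter.Eventually.of_forall hC')
  have h2 : (fun y : H3 => Γ y * Hdilate (⇑Ψ) a (Hmul (Hinv y) x))
      = fun y : H3 => Hdilate (⇑Ψ) a (Hmul (Hinv y) x) * Γ y := by
    funext y; ring
  rw [h2]
  exact h1

/-- g ⋆ K_{ε,A} = qc (g⋆ψ_{εk} − g⋆ψ_{Ak}). -/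
theorem conv_Kker_telescope (φ ψ : H3 → ℂ) (hφ : IsSchwartz φ) (hψ : IsSchwartz ψ)
    (k c : ℝ) (hk : 0 < k) (hc : 0 < c) (q : ℝ) (hq : q ≠ 0)
    (hdiff : ∀ a : ℝ, 0 < a → ∀ x : H3,
      DifferentiableAt ℝ (fun b : ℝ => Hdilate ψ (k * b ^ q) x) a)
    (hrel : ∀ a : ℝ, 0 < a → ∀ x : H3,
      Hconv (Hdilate (Htilde φ) (a ^ q)) (Hdilate φ (a ^ q)) x
        = -(((a * c : ℝ) : ℂ)) * deriv (fun b : ℝ => Hdilate ψ (k * b ^ q) x) a)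
    (g : H3 → ℂ) (hg : IsSchwartz g) (ε A : ℝ) (hε : 0 < ε) (hεA : ε < A) :
    ∀ x : H3, Hconv g (Kker φ ε A) x
      = ((q * c : ℝ) : ℂ) *
          (Hconv g (Hdilate ψ (ε * k)) x - Hconv g (Hdilate ψ (A * k)) x) := by
  intro x
  obtain ⟨Γ, hΓ⟩ := hg
  subst hΓ
  obtain ⟨Ψ, hΨ⟩ := hψ
  subst hΨ
  have hker : ∀ z : H3, Kker φ ε A z
      = ((q * c : ℝ) : ℂ) * (Hdilate (⇑Ψ) (ε * k) z - Hdilate (⇑Ψ) (A * k) z) :=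
    Kker_eq_telescope φ (⇑Ψ) ⟨Ψ, rfl⟩ k c hk q hq hrel ε A hε hεA
  have hεk : (0 : ℝ) < ε * k := mul_pos hε hk
  have hAk : (0 : ℝ) < A * k := mul_pos (hε.trans hεA) hk
  have hi1 := integrable_mul_Hdilate Γ Ψ (ε * k) hεk x
  have hi2 := integrable_mul_Hdilate Γ Ψ (A * k) hAk x
  show (∫ y : H3, Γ y * Kker φ ε A (Hmul (Hinv y) x))
      = ((q * c : ℝ) : ℂ) *
        ((∫ y : H3, Γ y * Hdilate (⇑Ψ) (ε * k) (Hmul (Hinv y) x))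
          - ∫ y : H3, Γ y * Hdilate (⇑Ψ) (A * k) (Hmul (Hinv y) x))
  have hsplit : (fun y : H3 => Γ y * Kker φ ε A (Hmul (Hinv y) x))
      = fun y : H3 =>
          ((q * c : ℝ) : ℂ) * (Γ y * Hdilate (⇑Ψ) (ε * k) (Hmul (Hinv y) x))
          - ((q * c : ℝ) : ℂ) * (Γ y * Hdilate (⇑Ψ) (A * k) (Hmul (Hinv y) x)) := by
    funext y
    rw [hker]
    ring
  rw [hsplit, MeasureTheory.integral_sub (hi1.const_mul _) (hi2.const_mul _),
    MeasureTheory.integral_const_mul, MeasureTheory.integral_const_mul]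
  ring
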